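/- Fourth difference operator formula (Proposition 4.3): for every Schwartz function κ : ℝ⁴ → ℂ, every Schwartz function h : ℝ → ℂ, every μ ∈ ℝ, every λ ∈ ℝ \ {0}, and u ∈ ℝ, the function λ ↦ (π_{λ,μ}(κ)h)(u) is differentiable on ℝ \ {0}, and (π_{λ,μ}(x₄κ)h)(u) = i ∂_λ(π_{λ,μ}(κ)h)(u) − (μ/(2λ²) + u²/2)(π_{λ,μ}(x₂κ)h)(u) + u(π_{λ,μ}(x₃κ)h)(u) − (π_{λ,μ}(x₁x₃κ)h)(u) + u(π_{λ,μ}(x₁x₂κ)h)(u) − ½(π_{λ,μ}(x₁²x₂κ)h)(u). -/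

import Mathlib

open MeasureTheory Complex

noncomputable section

instance : (volume : Measure (ℝ × ℝ)).IsAddHaarMeasure := by
  rw [Measure.volume_eq_prod]; infer_instance
instance : (volume : Measure (ℝ × ℝ × ℝ)).IsAddHaarMeasure := by
  rw [Measure.volume_eq_prod]; infer_instance
instance : (volume : Measure (ℝ × ℝ × ℝ × ℝ)).IsAddHaarMeasure := by
  rw [Measure.volume_eq_prod]; infer_instance

/-- The group Fourier transform on the Engel group:
`(π_{λ,μ}(κ)h)(u) = ∫_{ℝ⁴} κ(x) exp(i((μ/(2λ))x₂ − λx₄ + λx₃(u−x₁) − (λ/2)x₂(u−x₁)²)) h(u−x₁) dx`. -/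
def piF (lam mu : ℝ) (κ : ℝ × ℝ × ℝ × ℝ → ℂ) (h : ℝ → ℂ) (u : ℝ) : ℂ :=
  ∫ x : ℝ × ℝ × ℝ × ℝ,
    κ x * Complex.exp (Complex.I *
      (((mu / (2 * lam)) * x.2.1 - lam * x.2.2.2 + lam * x.2.2.1 * (u - x.1)
        - (lam / 2) * x.2.1 * (u - x.1) ^ 2 : ℝ) : ℂ)) * h (u - x.1)

/-- The phase function of `piF`. -/
def phiE (mu u l : ℝ) (x : ℝ × ℝ × ℝ × ℝ) : ℝ :=
  (mu / (2 * l)) * x.2.1 - l * x.2.2.2 + l * x.2.2.1 * (u - x.1)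
    - (l / 2) * x.2.1 * (u - x.1) ^ 2

/-- The `l`-derivative of the phase function. -/
def psiE (mu u l : ℝ) (x : ℝ × ℝ × ℝ × ℝ) : ℝ :=
  -(mu / (2 * l ^ 2)) * x.2.1 - x.2.2.2 + x.2.2.1 * (u - x.1)
    - x.2.1 * (u - x.1) ^ 2 / 2

lemma hasDerivAt_phiE (mu u : ℝ) {l : ℝ} (hl : l ≠ 0) (x : ℝ × ℝ × ℝ × ℝ) :
    HasDerivAt (fun l => phiE mu u l x) (psiE mu u l x) l := by
  have e : (fun l => phiE mu u l x) = fun l : ℝ =>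
      (mu / 2 * x.2.1) * l⁻¹ - l * x.2.2.2 + l * (x.2.2.1 * (u - x.1))
        - l * (x.2.1 * (u - x.1) ^ 2 / 2) := by
    funext l; unfold phiE; ring
  rw [e]
  have h1 : HasDerivAt (fun l : ℝ => (mu / 2 * x.2.1) * l⁻¹)
      ((mu / 2 * x.2.1) * (-(l ^ 2)⁻¹)) l := (hasDerivAt_inv hl).const_mul _
  have h2 : HasDerivAt (fun l : ℝ => l * x.2.2.2) x.2.2.2 l := hasDerivAt_mul_const _
  have h3 : HasDerivAt (fun l : ℝ => l * (x.2.2.1 * (u - x.1))) (x.2.2.1 * (u - x.1)) l :=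
    hasDerivAt_mul_const _
  have h4 : HasDerivAt (fun l : ℝ => l * (x.2.1 * (u - x.1) ^ 2 / 2))
      (x.2.1 * (u - x.1) ^ 2 / 2) l := hasDerivAt_mul_const _
  have := ((h1.sub h2).add h3).sub h4
  refine this.congr_deriv ?_
  unfold psiE; ring

lemma hasDerivAt_integrand (κ : SchwartzMap (ℝ × ℝ × ℝ × ℝ) ℂ) (h : SchwartzMap ℝ ℂ)
    (mu u : ℝ) {l : ℝ} (hl : l ≠ 0) (x : ℝ × ℝ × ℝ × ℝ) :
    HasDerivAt (fun l => κ x * Complex.exp (Complex.I * (phiE mu u l x : ℂ)) * h (u - x.1))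
      (κ x * (Complex.exp (Complex.I * (phiE mu u l x : ℂ)) *
        (Complex.I * (psiE mu u l x : ℂ))) * h (u - x.1)) l :=
  ((((hasDerivAt_phiE mu u hl x).ofReal_comp.const_mul Complex.I).cexp.const_mul
    (κ x)).mul_const _)

lemma norm_expI (r : ℝ) : ‖Complex.exp (Complex.I * r)‖ = 1 := by
  rw [mul_comm]
  simp [Complex.norm_exp_ofReal_mul_I]

lemma cube_bounds {s : ℝ} (hs : 0 ≤ s) :
    s ≤ (1 + s) ^ 3 ∧ s ^ 2 ≤ (1 + s) ^ 3 ∧ s ^ 3 ≤ (1 + s) ^ 3 := by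
  refine ⟨?_, ?_, ?_⟩ <;> nlinarith [sq_nonneg s, sq_nonneg (1 + s), mul_nonneg hs hs]

lemma abs_psiE_le (mu u : ℝ) {lam l : ℝ} (hlam : lam ≠ 0) (hl : |lam| / 2 ≤ |l|)
    (x : ℝ × ℝ × ℝ × ℝ) :
    |psiE mu u l x| ≤
      (2 * |mu| / lam ^ 2 + 1 + (|u| + 1) + (|u| + 1) ^ 2) * (1 + ‖x‖) ^ 3 := by
  set s := ‖x‖ with hs_def
  have hs : 0 ≤ s := norm_nonneg x
  have a1 : |x.1| ≤ s := by
    simpa [Real.norm_eq_abs] using norm_fst_le x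
  have a2 : |x.2.1| ≤ s := by
    simpa [Real.norm_eq_abs] using (norm_fst_le x.2).trans (norm_snd_le x)
  have a3 : |x.2.2.1| ≤ s := by
    simpa [Real.norm_eq_abs] using
      ((norm_fst_le x.2.2).trans (norm_snd_le x.2)).trans (norm_snd_le x)
  have a4 : |x.2.2.2| ≤ s := by
    simpa [Real.norm_eq_abs] using
      ((norm_snd_le x.2.2).trans (norm_snd_le x.2)).trans (norm_snd_le x)
  have hlam2 : 0 < lam ^ 2 := by positivity
  have hl2 : lam ^ 2 ≤ 4 * l ^ 2 := by
    nlinarith [_root_.sq_abs lam, _root_.sq_abs l, abs_nonneg lam, abs_nonneg l]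
  have hl0 : (0:ℝ) < l ^ 2 := by nlinarith [abs_pos.2 hlam]
  set d : ℝ := 2 * |mu| / lam ^ 2 with hd_def
  have hd : 0 ≤ d := by positivity
  have hA : |mu / (2 * l ^ 2)| ≤ d := by
    rw [abs_div, div_le_div_iff₀ (by positivity) hlam2]
    have h2l : |2 * l ^ 2| = 2 * l ^ 2 := _root_.abs_of_nonneg (by positivity)
    rw [h2l]
    nlinarith [abs_nonneg mu]
  have h5 : |u - x.1| ≤ |u| + s := (abs_sub u x.1).trans (by linarith)
  have h5' := abs_le.1 h5
  have hsq : (u - x.1) ^ 2 ≤ (|u| + s) ^ 2 := sq_le_sq' (by linarith) h5'.2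
  have e1 : |(-(mu / (2 * l ^ 2)) * x.2.1)| ≤ d * s := by
    rw [abs_mul, abs_neg]
    exact mul_le_mul hA a2 (abs_nonneg _) hd
  have e3 : |x.2.2.1 * (u - x.1)| ≤ s * (|u| + s) := by
    rw [abs_mul]
    exact mul_le_mul a3 h5 (abs_nonneg _) hs
  have e4 : |x.2.1 * (u - x.1) ^ 2 / 2| ≤ s * (|u| + s) ^ 2 / 2 := by
    rw [abs_div, abs_mul, _root_.abs_of_nonneg (sq_nonneg (u - x.1)), _root_.abs_two]
    gcongr
  have t : |psiE mu u l x| ≤ d * s + s + s * (|u| + s) + s * (|u| + s) ^ 2 / 2 := by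
    have T1 := abs_sub (-(mu / (2 * l ^ 2)) * x.2.1 - x.2.2.2 + x.2.2.1 * (u - x.1))
      (x.2.1 * (u - x.1) ^ 2 / 2)
    have T2 := abs_add_le (-(mu / (2 * l ^ 2)) * x.2.1 - x.2.2.2) (x.2.2.1 * (u - x.1))
    have T3 := abs_sub (-(mu / (2 * l ^ 2)) * x.2.1) x.2.2.2
    unfold psiE
    linarith [e1, e3, e4, a4, T1, T2, T3]
  refine t.trans ?_
  have hs3 : s ≤ (1 + s) ^ 3 := (cube_bounds hs).1
  have hM : |u| + s ≤ (|u| + 1) * (1 + s) := by nlinarith [abs_nonneg u]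
  have hpow : (1 + s) ^ 2 ≤ (1 + s) ^ 3 :=
    pow_le_pow_right₀ (by linarith) (by norm_num)
  have hB : s * (|u| + s) ≤ (|u| + 1) * (1 + s) ^ 3 := by
    calc s * (|u| + s) ≤ (1 + s) * ((|u| + 1) * (1 + s)) :=
          mul_le_mul (by linarith) hM (by positivity) (by linarith)
      _ = (|u| + 1) * (1 + s) ^ 2 := by ring
      _ ≤ (|u| + 1) * (1 + s) ^ 3 := mul_le_mul_of_nonneg_left hpow (by positivity)
  have hC : s * (|u| + s) ^ 2 / 2 ≤ (|u| + 1) ^ 2 * (1 + s) ^ 3 := by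
    have h6 : (|u| + s) ^ 2 ≤ ((|u| + 1) * (1 + s)) ^ 2 := by
      have hp1 : (0:ℝ) ≤ |u| + s := by positivity
      have hp2 : (0:ℝ) ≤ (|u| + 1) * (1 + s) := by positivity
      exact sq_le_sq' (by linarith) hM
    have h7 : s * (|u| + s) ^ 2 ≤ (1 + s) * ((|u| + 1) * (1 + s)) ^ 2 :=
      mul_le_mul (by linarith) h6 (sq_nonneg _) (by linarith)
    have h8 : s * (|u| + s) ^ 2 / 2 ≤ s * (|u| + s) ^ 2 := half_le_self (by positivity)
    calc s * (|u| + s) ^ 2 / 2 ≤ (1 + s) * ((|u| + 1) * (1 + s)) ^ 2 := h8.trans h7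
      _ = (|u| + 1) ^ 2 * (1 + s) ^ 3 := by ring
  have hdd : d * s ≤ d * (1 + s) ^ 3 := mul_le_mul_of_nonneg_left hs3 hd
  have hexp : (d + 1 + (|u| + 1) + (|u| + 1) ^ 2) * (1 + s) ^ 3
      = d * (1 + s) ^ 3 + (1 + s) ^ 3 + (|u| + 1) * (1 + s) ^ 3
        + (|u| + 1) ^ 2 * (1 + s) ^ 3 := by ring
  rw [hexp]
  linarith

/-- Fourth difference operator formula (Proposition 4.3): for Schwartz `κ` and `h`, every
`μ`, every `λ ≠ 0` and `u`, the map `λ ↦ (π_{λ,μ}(κ)h)(u)` is differentiable on `ℝ\{0}`,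
and `(π_{λ,μ}(x₄κ)h)(u) = i∂_λ(π_{λ,μ}(κ)h)(u) − (μ/(2λ²)+u²/2)(π_{λ,μ}(x₂κ)h)(u)
+ u(π_{λ,μ}(x₃κ)h)(u) − (π_{λ,μ}(x₁x₃κ)h)(u) + u(π_{λ,μ}(x₁x₂κ)h)(u)
− ½(π_{λ,μ}(x₁²x₂κ)h)(u)`. -/
theorem engel_difference_operator_x4 :
    ∀ κ : SchwartzMap (ℝ × ℝ × ℝ × ℝ) ℂ, ∀ h : SchwartzMap ℝ ℂ,
      ∀ mu : ℝ, ∀ lam : ℝ, lam ≠ 0 → ∀ u : ℝ,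
        DifferentiableAt ℝ (fun l : ℝ => piF l mu κ h u) lam ∧
        piF lam mu (fun x => (x.2.2.2 : ℂ) * κ x) h u =
          Complex.I * deriv (fun l : ℝ => piF l mu κ h u) lam
            - ((mu / (2 * lam ^ 2) + u ^ 2 / 2 : ℝ) : ℂ) *
                piF lam mu (fun x => (x.2.1 : ℂ) * κ x) h u
            + (u : ℂ) * piF lam mu (fun x => (x.2.2.1 : ℂ) * κ x) h u
            - piF lam mu (fun x => (x.1 : ℂ) * (x.2.2.1 : ℂ) * κ x) h u
            + (u : ℂ) * piF lam mu (fun x => (x.1 : ℂ) * (x.2.1 : ℂ) * κ x) h u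
            - (1 / 2 : ℂ) * piF lam mu (fun x => (x.1 : ℂ) ^ 2 * (x.2.1 : ℂ) * κ x) h u := by
  intro κ h mu lam hlam u
  -- bound for h
  obtain ⟨Ch, hChpos, hCh0⟩ := h.decay 0 0
  have hCh : ∀ v : ℝ, ‖h v‖ ≤ Ch := by
    intro v
    simpa [norm_iteratedFDeriv_zero] using hCh0 v
  have hCh_nn : 0 ≤ Ch := hChpos.le
  -- master integrable bound
  have hBint : Integrable (fun x : ℝ × ℝ × ℝ × ℝ => (1 + ‖x‖) ^ 3 * ‖κ x‖) := by
    have h0 := κ.integrable_pow_mul volume 0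
    have h1 := κ.integrable_pow_mul volume 1
    have h2 := κ.integrable_pow_mul volume 2
    have h3 := κ.integrable_pow_mul volume 3
    have hsum := h0.add (((h1.const_mul 3).add ((h2.const_mul 3).add h3)))
    refine hsum.congr (Filter.Eventually.of_forall fun x => ?_)
    simp only [Pi.add_apply]
    ring
  -- generic integrability
  have hIntG : ∀ p : (ℝ × ℝ × ℝ × ℝ) → ℂ, Continuous p →
      (∀ x, ‖p x‖ ≤ (1 + ‖x‖) ^ 3) →
      Integrable (fun x : ℝ × ℝ × ℝ × ℝ =>
        p x * κ x * Complex.exp (Complex.I * (phiE mu u lam x : ℂ)) * h (u - x.1)) := by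
    intro p hpc hpb
    refine (hBint.const_mul Ch).mono' ?_ (Filter.Eventually.of_forall fun x => ?_)
    · apply Continuous.aestronglyMeasurable
      refine ((hpc.mul κ.continuous).mul ?_).mul
        (h.continuous.comp (continuous_const.sub continuous_fst))
      exact Complex.continuous_exp.comp
        (continuous_const.mul (Complex.continuous_ofReal.comp (by unfold phiE; fun_prop)))
    · have hE1 : ‖Complex.exp (Complex.I * (phiE mu u lam x : ℂ))‖ = 1 := norm_expI _
      calc ‖p x * κ x * Complex.exp (Complex.I * (phiE mu u lam x : ℂ)) * h (u - x.1)‖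
          = ‖p x‖ * ‖κ x‖ * ‖Complex.exp (Complex.I * (phiE mu u lam x : ℂ))‖
              * ‖h (u - x.1)‖ := by rw [norm_mul, norm_mul, norm_mul]
        _ = ‖p x‖ * ‖κ x‖ * ‖h (u - x.1)‖ := by rw [hE1]; ring
        _ ≤ (1 + ‖x‖) ^ 3 * ‖κ x‖ * Ch :=
            mul_le_mul (mul_le_mul_of_nonneg_right (hpb x) (norm_nonneg _)) (hCh _)
              (norm_nonneg _) (by positivity)
        _ = Ch * ((1 + ‖x‖) ^ 3 * ‖κ x‖) := by ring
  -- coordinate bounds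
  have ha1 : ∀ x : ℝ × ℝ × ℝ × ℝ, |x.1| ≤ ‖x‖ := fun x => by
    simpa [Real.norm_eq_abs] using norm_fst_le x
  have ha2 : ∀ x : ℝ × ℝ × ℝ × ℝ, |x.2.1| ≤ ‖x‖ := fun x => by
    simpa [Real.norm_eq_abs] using (norm_fst_le x.2).trans (norm_snd_le x)
  have ha3 : ∀ x : ℝ × ℝ × ℝ × ℝ, |x.2.2.1| ≤ ‖x‖ := fun x => by
    simpa [Real.norm_eq_abs] using
      ((norm_fst_le x.2.2).trans (norm_snd_le x.2)).trans (norm_snd_le x)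
  have ha4 : ∀ x : ℝ × ℝ × ℝ × ℝ, |x.2.2.2| ≤ ‖x‖ := fun x => by
    simpa [Real.norm_eq_abs] using
      ((norm_snd_le x.2.2).trans (norm_snd_le x.2)).trans (norm_snd_le x)
  -- the six integrabilities
  have hi4 : Integrable (fun x : ℝ × ℝ × ℝ × ℝ => (x.2.2.2 : ℂ) * κ x *
      Complex.exp (Complex.I * (phiE mu u lam x : ℂ)) * h (u - x.1)) := by
    refine hIntG _ (by fun_prop) fun x => ?_
    have := (cube_bounds (norm_nonneg x)).1
    simp only [Complex.norm_real, Real.norm_eq_abs]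
    linarith [ha4 x]
  have hi2 : Integrable (fun x : ℝ × ℝ × ℝ × ℝ => (x.2.1 : ℂ) * κ x *
      Complex.exp (Complex.I * (phiE mu u lam x : ℂ)) * h (u - x.1)) := by
    refine hIntG _ (by fun_prop) fun x => ?_
    have := (cube_bounds (norm_nonneg x)).1
    simp only [Complex.norm_real, Real.norm_eq_abs]
    linarith [ha2 x]
  have hi3 : Integrable (fun x : ℝ × ℝ × ℝ × ℝ => (x.2.2.1 : ℂ) * κ x *
      Complex.exp (Complex.I * (phiE mu u lam x : ℂ)) * h (u - x.1)) := by
    refine hIntG _ (by fun_prop) fun x => ?_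
    have := (cube_bounds (norm_nonneg x)).1
    simp only [Complex.norm_real, Real.norm_eq_abs]
    linarith [ha3 x]
  have hi13 : Integrable (fun x : ℝ × ℝ × ℝ × ℝ => (x.1 : ℂ) * (x.2.2.1 : ℂ) * κ x *
      Complex.exp (Complex.I * (phiE mu u lam x : ℂ)) * h (u - x.1)) := by
    refine hIntG (fun x => (x.1 : ℂ) * (x.2.2.1 : ℂ)) (by fun_prop) fun x => ?_
    have hc := (cube_bounds (norm_nonneg x)).2.1
    have hs : (0:ℝ) ≤ ‖x‖ := norm_nonneg x
    simp only [norm_mul, Complex.norm_real, Real.norm_eq_abs]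
    calc |x.1| * |x.2.2.1| ≤ ‖x‖ * ‖x‖ :=
          mul_le_mul (ha1 x) (ha3 x) (abs_nonneg _) hs
      _ = ‖x‖ ^ 2 := by ring
      _ ≤ (1 + ‖x‖) ^ 3 := hc
  have hi12 : Integrable (fun x : ℝ × ℝ × ℝ × ℝ => (x.1 : ℂ) * (x.2.1 : ℂ) * κ x *
      Complex.exp (Complex.I * (phiE mu u lam x : ℂ)) * h (u - x.1)) := by
    refine hIntG (fun x => (x.1 : ℂ) * (x.2.1 : ℂ)) (by fun_prop) fun x => ?_
    have hc := (cube_bounds (norm_nonneg x)).2.1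
    have hs : (0:ℝ) ≤ ‖x‖ := norm_nonneg x
    simp only [norm_mul, Complex.norm_real, Real.norm_eq_abs]
    calc |x.1| * |x.2.1| ≤ ‖x‖ * ‖x‖ :=
          mul_le_mul (ha1 x) (ha2 x) (abs_nonneg _) hs
      _ = ‖x‖ ^ 2 := by ring
      _ ≤ (1 + ‖x‖) ^ 3 := hc
  have hi122 : Integrable (fun x : ℝ × ℝ × ℝ × ℝ => (x.1 : ℂ) ^ 2 * (x.2.1 : ℂ) * κ x *
      Complex.exp (Complex.I * (phiE mu u lam x : ℂ)) * h (u - x.1)) := by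
    refine hIntG (fun x => (x.1 : ℂ) ^ 2 * (x.2.1 : ℂ)) (by fun_prop) fun x => ?_
    have hc := (cube_bounds (norm_nonneg x)).2.2
    have hs : (0:ℝ) ≤ ‖x‖ := norm_nonneg x
    simp only [norm_mul, norm_pow, Complex.norm_real, Real.norm_eq_abs]
    calc |x.1| ^ 2 * |x.2.1| ≤ ‖x‖ ^ 2 * ‖x‖ := by
          apply mul_le_mul _ (ha2 x) (abs_nonneg _) (by positivity)
          exact pow_le_pow_left₀ (abs_nonneg _) (ha1 x) 2
      _ = ‖x‖ ^ 3 := by ring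
      _ ≤ (1 + ‖x‖) ^ 3 := hc
  -- integrability of the base integrand
  have hi1 : Integrable (fun x : ℝ × ℝ × ℝ × ℝ => κ x *
      Complex.exp (Complex.I * (phiE mu u lam x : ℂ)) * h (u - x.1)) := by
    have := hIntG (fun _ => 1) continuous_const fun x => by
      simp only [norm_one]
      have hs : (0:ℝ) ≤ ‖x‖ := norm_nonneg x
      nlinarith [sq_nonneg ‖x‖]
    simpa using this
  -- ball facts
  have hε : (0:ℝ) < |lam| / 2 := by
    have := abs_pos.2 hlam; linarith
  have hball : ∀ l ∈ Metric.ball lam (|lam| / 2), |lam| / 2 ≤ |l| ∧ l ≠ 0 := by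
    intro l hl
    rw [Metric.mem_ball, Real.dist_eq] at hl
    have h1 : |lam| - |l| ≤ |l - lam| := by
      rw [abs_sub_comm]; exact abs_sub_abs_le_abs_sub lam l
    have h2 : |lam| / 2 ≤ |l| := by linarith
    refine ⟨h2, fun h0 => ?_⟩
    rw [h0] at h2; simp at h2; linarith
  -- dominated differentiation
  obtain ⟨hFi', hD⟩ :=
    hasDerivAt_integral_of_dominated_loc_of_deriv_le (μ := volume)
      (F := fun l (x : ℝ × ℝ × ℝ × ℝ) =>
        κ x * Complex.exp (Complex.I * (phiE mu u l x : ℂ)) * h (u - x.1))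
      (F' := fun l (x : ℝ × ℝ × ℝ × ℝ) =>
        κ x * (Complex.exp (Complex.I * (phiE mu u l x : ℂ)) *
          (Complex.I * (psiE mu u l x : ℂ))) * h (u - x.1))
      (x₀ := lam)
      (bound := fun x => Ch * ((2 * |mu| / lam ^ 2 + 1 + (|u| + 1) + (|u| + 1) ^ 2) *
        ((1 + ‖x‖) ^ 3 * ‖κ x‖)))
      (Metric.ball_mem_nhds lam hε)
      (Filter.Eventually.of_forall fun l => by
        apply Continuous.aestronglyMeasurable
        refine (κ.continuous.mul ?_).mul
          (h.continuous.comp (continuous_const.sub continuous_fst))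
        exact Complex.continuous_exp.comp
          (continuous_const.mul (Complex.continuous_ofReal.comp (by unfold phiE; fun_prop))))
      hi1
      (by
        apply Continuous.aestronglyMeasurable
        refine (κ.continuous.mul ?_).mul
          (h.continuous.comp (continuous_const.sub continuous_fst))
        refine (Complex.continuous_exp.comp
          (continuous_const.mul (Complex.continuous_ofReal.comp
            (by unfold phiE; fun_prop)))).mul ?_
        exact continuous_const.mul (Complex.continuous_ofReal.comp (by unfold psiE; fun_prop)))
      (Filter.Eventually.of_forall fun x => by
        intro l hl
        have hln := hball l hl
        have hψ := abs_psiE_le mu u hlam hln.1 x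
        have hh := hCh (u - x.1)
        have hnorm : ‖κ x * (Complex.exp (Complex.I * (phiE mu u l x : ℂ)) *
            (Complex.I * (psiE mu u l x : ℂ))) * h (u - x.1)‖
            = ‖κ x‖ * |psiE mu u l x| * ‖h (u - x.1)‖ := by
          rw [norm_mul, norm_mul, norm_mul, norm_mul, norm_expI, Complex.norm_I,
            Complex.norm_real, Real.norm_eq_abs]
          ring
        rw [hnorm]
        have hCpos : (0:ℝ) ≤ 2 * |mu| / lam ^ 2 + 1 + (|u| + 1) + (|u| + 1) ^ 2 := by
          positivity
        calc ‖κ x‖ * |psiE mu u l x| * ‖h (u - x.1)‖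
            ≤ ‖κ x‖ * ((2 * |mu| / lam ^ 2 + 1 + (|u| + 1) + (|u| + 1) ^ 2) *
                (1 + ‖x‖) ^ 3) * Ch :=
              mul_le_mul (mul_le_mul_of_nonneg_left hψ (norm_nonneg _)) hh
                (norm_nonneg _) (by positivity)
          _ = Ch * ((2 * |mu| / lam ^ 2 + 1 + (|u| + 1) + (|u| + 1) ^ 2) *
                ((1 + ‖x‖) ^ 3 * ‖κ x‖)) := by ring)
      (((hBint.const_mul _).const_mul Ch))
      (Filter.Eventually.of_forall fun x => by
        intro l hl
        exact hasDerivAt_integrand κ h mu u (hball l hl).2 x)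
  constructor
  · exact hD.differentiableAt
  · have hderiv : deriv (fun l : ℝ => piF l mu (⇑κ) (⇑h) u) lam =
        ∫ x : ℝ × ℝ × ℝ × ℝ, κ x * (Complex.exp (Complex.I * (phiE mu u lam x : ℂ)) *
          (Complex.I * (psiE mu u lam x : ℂ))) * h (u - x.1) := hD.deriv
    rw [hderiv]
    -- rewrite the piF terms as integrals
    have e4 : piF lam mu (fun x => (x.2.2.2 : ℂ) * κ x) (⇑h) u =
        ∫ x : ℝ × ℝ × ℝ × ℝ, (x.2.2.2 : ℂ) * κ x *
          Complex.exp (Complex.I * (phiE mu u lam x : ℂ)) * h (u - x.1) := rfl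
    have e2 : piF lam mu (fun x => (x.2.1 : ℂ) * κ x) (⇑h) u =
        ∫ x : ℝ × ℝ × ℝ × ℝ, (x.2.1 : ℂ) * κ x *
          Complex.exp (Complex.I * (phiE mu u lam x : ℂ)) * h (u - x.1) := rfl
    have e3 : piF lam mu (fun x => (x.2.2.1 : ℂ) * κ x) (⇑h) u =
        ∫ x : ℝ × ℝ × ℝ × ℝ, (x.2.2.1 : ℂ) * κ x *
          Complex.exp (Complex.I * (phiE mu u lam x : ℂ)) * h (u - x.1) := rfl
    have e13 : piF lam mu (fun x => (x.1 : ℂ) * (x.2.2.1 : ℂ) * κ x) (⇑h) u =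
        ∫ x : ℝ × ℝ × ℝ × ℝ, (x.1 : ℂ) * (x.2.2.1 : ℂ) * κ x *
          Complex.exp (Complex.I * (phiE mu u lam x : ℂ)) * h (u - x.1) := rfl
    have e12 : piF lam mu (fun x => (x.1 : ℂ) * (x.2.1 : ℂ) * κ x) (⇑h) u =
        ∫ x : ℝ × ℝ × ℝ × ℝ, (x.1 : ℂ) * (x.2.1 : ℂ) * κ x *
          Complex.exp (Complex.I * (phiE mu u lam x : ℂ)) * h (u - x.1) := rfl
    have e122 : piF lam mu (fun x => (x.1 : ℂ) ^ 2 * (x.2.1 : ℂ) * κ x) (⇑h) u =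
        ∫ x : ℝ × ℝ × ℝ × ℝ, (x.1 : ℂ) ^ 2 * (x.2.1 : ℂ) * κ x *
          Complex.exp (Complex.I * (phiE mu u lam x : ℂ)) * h (u - x.1) := rfl
    rw [e4, e2, e3, e13, e12, e122]
    -- key computation
    have hA2 := hi2.const_mul ((mu / (2 * lam ^ 2) + u ^ 2 / 2 : ℝ) : ℂ)
    have hA3 := hi3.const_mul (u : ℂ)
    have hA5 := hi12.const_mul (u : ℂ)
    have hA6 := hi122.const_mul ((1 : ℂ) / 2)
    have key : Complex.I * ∫ x : ℝ × ℝ × ℝ × ℝ,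
        κ x * (Complex.exp (Complex.I * (phiE mu u lam x : ℂ)) *
          (Complex.I * (psiE mu u lam x : ℂ))) * h (u - x.1)
        = (∫ x : ℝ × ℝ × ℝ × ℝ, (x.2.2.2 : ℂ) * κ x *
            Complex.exp (Complex.I * (phiE mu u lam x : ℂ)) * h (u - x.1))
          + ((mu / (2 * lam ^ 2) + u ^ 2 / 2 : ℝ) : ℂ) *
            (∫ x : ℝ × ℝ × ℝ × ℝ, (x.2.1 : ℂ) * κ x *
              Complex.exp (Complex.I * (phiE mu u lam x : ℂ)) * h (u - x.1))
          - (u : ℂ) * (∫ x : ℝ × ℝ × ℝ × ℝ, (x.2.2.1 : ℂ) * κ x *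
              Complex.exp (Complex.I * (phiE mu u lam x : ℂ)) * h (u - x.1))
          + (∫ x : ℝ × ℝ × ℝ × ℝ, (x.1 : ℂ) * (x.2.2.1 : ℂ) * κ x *
              Complex.exp (Complex.I * (phiE mu u lam x : ℂ)) * h (u - x.1))
          - (u : ℂ) * (∫ x : ℝ × ℝ × ℝ × ℝ, (x.1 : ℂ) * (x.2.1 : ℂ) * κ x *
              Complex.exp (Complex.I * (phiE mu u lam x : ℂ)) * h (u - x.1))
          + ((1 : ℂ) / 2) * (∫ x : ℝ × ℝ × ℝ × ℝ, (x.1 : ℂ) ^ 2 * (x.2.1 : ℂ) * κ x *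
              Complex.exp (Complex.I * (phiE mu u lam x : ℂ)) * h (u - x.1)) := by
      rw [← integral_const_mul]
      have hptw : ∀ x : ℝ × ℝ × ℝ × ℝ,
          Complex.I * (κ x * (Complex.exp (Complex.I * (phiE mu u lam x : ℂ)) *
            (Complex.I * (psiE mu u lam x : ℂ))) * h (u - x.1))
          = (x.2.2.2 : ℂ) * κ x *
              Complex.exp (Complex.I * (phiE mu u lam x : ℂ)) * h (u - x.1)
            + ((mu / (2 * lam ^ 2) + u ^ 2 / 2 : ℝ) : ℂ) *
              ((x.2.1 : ℂ) * κ x *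
                Complex.exp (Complex.I * (phiE mu u lam x : ℂ)) * h (u - x.1))
            - (u : ℂ) * ((x.2.2.1 : ℂ) * κ x *
                Complex.exp (Complex.I * (phiE mu u lam x : ℂ)) * h (u - x.1))
            + (x.1 : ℂ) * (x.2.2.1 : ℂ) * κ x *
                Complex.exp (Complex.I * (phiE mu u lam x : ℂ)) * h (u - x.1)
            - (u : ℂ) * ((x.1 : ℂ) * (x.2.1 : ℂ) * κ x *
                Complex.exp (Complex.I * (phiE mu u lam x : ℂ)) * h (u - x.1))
            + ((1 : ℂ) / 2) * ((x.1 : ℂ) ^ 2 * (x.2.1 : ℂ) * κ x *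
                Complex.exp (Complex.I * (phiE mu u lam x : ℂ)) * h (u - x.1)) := by
        intro x
        have hstep : Complex.I * (κ x * (Complex.exp (Complex.I * (phiE mu u lam x : ℂ)) *
            (Complex.I * (psiE mu u lam x : ℂ))) * h (u - x.1))
            = (Complex.I * Complex.I) * (((psiE mu u lam x : ℝ) : ℂ) *
              (κ x * Complex.exp (Complex.I * (phiE mu u lam x : ℂ)) * h (u - x.1))) := by
          ring
        rw [hstep, Complex.I_mul_I]
        unfold psiE
        push_cast
        ring
      simp only [hptw]
      have hS2 : Integrable (fun x : ℝ × ℝ × ℝ × ℝ => (x.2.2.2 : ℂ) * κ x * Complex.exp (Complex.I * (phiE mu u lam x : ℂ)) * h (u - x.1) + ((mu / (2 * lam ^ 2) + u ^ 2 / 2 : ℝ) : ℂ) * ((x.2.1 : ℂ) * κ x * Complex.exp (Complex.I * (phiE mu u lam x : ℂ)) * h (u - x.1))) := hi4.add hA2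
      have hS3 : Integrable (fun x : ℝ × ℝ × ℝ × ℝ => (x.2.2.2 : ℂ) * κ x * Complex.exp (Complex.I * (phiE mu u lam x : ℂ)) * h (u - x.1) + ((mu / (2 * lam ^ 2) + u ^ 2 / 2 : ℝ) : ℂ) * ((x.2.1 : ℂ) * κ x * Complex.exp (Complex.I * (phiE mu u lam x : ℂ)) * h (u - x.1)) - (u : ℂ) * ((x.2.2.1 : ℂ) * κ x * Complex.exp (Complex.I * (phiE mu u lam x : ℂ)) * h (u - x.1))) := hS2.sub hA3
      have hS4 : Integrable (fun x : ℝ × ℝ × ℝ × ℝ => (x.2.2.2 : ℂ) * κ x * Complex.exp (Complex.I * (phiE mu u lam x : ℂ)) * h (u - x.1) + ((mu / (2 * lam ^ 2) + u ^ 2 / 2 : ℝ) : ℂ) * ((x.2.1 : ℂ) * κ x * Complex.exp (Complex.I * (phiE mu u lam x : ℂ)) * h (u - x.1)) - (u : ℂ) * ((x.2.2.1 : ℂ) * κ x * Complex.exp (Complex.I * (phiE mu u lam x : ℂ)) * h (u - x.1)) + (x.1 : ℂ) * (x.2.2.1 : ℂ) * κ x * Complex.exp (Complex.I * (phiE mu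 u lam x : ℂ)) * h (u - x.1)) := hS3.add hi13
      have hS5 : Integrable (fun x : ℝ × ℝ × ℝ × ℝ => (x.2.2.2 : ℂ) * κ x * Complex.exp (Complex.I * (phiE mu u lam x : ℂ)) * h (u - x.1) + ((mu / (2 * lam ^ 2) + u ^ 2 / 2 : ℝ) : ℂ) * ((x.2.1 : ℂ) * κ x * Complex.exp (Complex.I * (phiE mu u lam x : ℂ)) * h (u - x.1)) - (u : ℂ) * ((x.2.2.1 : ℂ) * κ x * Complex.exp (Complex.I * (phiE mu u lam x : ℂ)) * h (u - x.1)) + (x.1 : ℂ) * (x.2.2.1 : ℂ) * κ x * Complex.exp (Complex.I * (phiE mu u lam x : ℂ)) * h (u - x.1) - (u : ℂ) * ((x.1 : ℂ) * (x.2.1 : ℂ) * κ x * Complex.exp (Complex.I * (phiE mu u lam x : ℂ)) * h (u - x.1))) := hS4.sub hA5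
      rw [integral_add hS5 hA6,
        integral_sub hS4 hA5,
        integral_add hS3 hi13,
        integral_sub hS2 hA3,
        integral_add hi4 hA2,
        integral_const_mul, integral_const_mul, integral_const_mul, integral_const_mul]
    rw [key]
    ring
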